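/- The set Γ of ℕ×ℕ matrices A with entries in a commutative ring k, such that the set of entries {A_{i,j}} is finite and there exists a natural number n_A such that every row and every column of A has at most n_A non-zero entries, forms a k-algebra under matrix addition and matrix multiplication (matrix multiplication being well-defined since each sum ∑_j A_{i,j}B_{j,l} has only finitely many non-zero terms). -/

import Mathlib

/-- `Gamma k A` : the ℕ×ℕ matrix `A` over `k` has a finite set of entries
and there is a uniform bound `n` on the number of non-zero entries in each
row and in each column. -/
def Gamma (k : Type*) [CommRing k] (A : ℕ → ℕ → k) : Prop :=
  {x : k | ∃ i j, A i j = x}.Finite ∧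
    ∃ n : ℕ, (∀ i, {j | A i j ≠ 0}.encard ≤ n) ∧ (∀ j, {i | A i j ≠ 0}.encard ≤ n)

open Classical in
/-- Bound on the cardinality of a bounded union of uniformly bounded sets. -/
lemma encard_biUnion_le_aux {s : Set ℕ} {t : ℕ → Set ℕ} {n m : ℕ}
    (hs : s.encard ≤ n) (ht : ∀ a, (t a).encard ≤ m) :
    (⋃ a ∈ s, t a).encard ≤ (n * m : ℕ) := by
  have hsf : s.Finite := Set.finite_of_encard_le_coe hs
  have htf : ∀ a, (t a).Finite := fun a => Set.finite_of_encard_le_coe (ht a)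
  have hEq : (⋃ a ∈ s, t a) = ↑(hsf.toFinset.biUnion (fun a => (htf a).toFinset)) := by
    ext x
    simp [Set.mem_iUnion]
  rw [hEq, Set.encard_coe_eq_coe_finsetCard]
  have hcard : (hsf.toFinset.biUnion (fun a => (htf a).toFinset)).card ≤ n * m := by
    refine le_trans (Finset.card_biUnion_le) ?_
    have h1 : ∀ a ∈ hsf.toFinset, (htf a).toFinset.card ≤ m := by
      intro a _
      have := ht a
      rwa [(htf a).encard_eq_coe_toFinset_card, Nat.cast_le] at this
    calc ∑ a ∈ hsf.toFinset, (htf a).toFinset.card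
        ≤ ∑ _a ∈ hsf.toFinset, m := Finset.sum_le_sum h1
      _ = hsf.toFinset.card * m := by rw [Finset.sum_const, smul_eq_mul]
      _ ≤ n * m := by
          have : hsf.toFinset.card ≤ n := by
            have := hs
            rwa [hsf.encard_eq_coe_toFinset_card, Nat.cast_le] at this
          exact Nat.mul_le_mul_right m this
  exact_mod_cast hcard

/-- Sums of at most `n` elements of a finite set lie in a finite set. -/
lemma exists_finite_sums {k : Type*} [CommRing k] (P : Set k) (hP : P.Finite) (n : ℕ) :
    ∃ T : Set k, T.Finite ∧ 0 ∈ T ∧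
      ∀ (S : Finset ℕ) (f : ℕ → k), S.card ≤ n → (∀ j ∈ S, f j ∈ P) → ∑ j ∈ S, f j ∈ T := by
  induction n with
  | zero =>
      refine ⟨{0}, Set.finite_singleton 0, rfl, ?_⟩
      intro S f hS _
      have : S = ∅ := Finset.card_eq_zero.mp (Nat.le_zero.mp hS)
      simp [this]
  | succ n ih =>
      obtain ⟨T, hTfin, hT0, hT⟩ := ih
      refine ⟨T ∪ Set.image2 (· + ·) P T, hTfin.union (hP.image2 _ hTfin), Or.inl hT0, ?_⟩
      intro S f hS hf
      rcases S.eq_empty_or_nonempty with rfl | ⟨j, hj⟩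
      · simpa using Or.inl hT0
      · classical
        rw [← Finset.add_sum_erase S f hj]
        refine Or.inr (Set.mem_image2_of_mem (hf j hj) (hT _ f ?_ ?_))
        · have := Finset.card_erase_of_mem hj
          omega
        · intro x hx
          exact hf x (Finset.mem_of_mem_erase hx)

/-- The set Γ of ℕ×ℕ matrices with finite entry set and uniformly bounded number
of non-zero entries in each row and column forms a `k`-algebra under matrix
addition and matrix multiplication; in particular the sums
`∑ j, A i j * B j l` defining the product have only finitely many non-zero terms. -/
theorem gamma_is_algebra (k : Type*) [CommRing k] :
    -- contains the zero matrix and the identity matrix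
    Gamma k (fun _ _ => 0) ∧
    Gamma k (fun i j => if i = j then (1 : k) else 0) ∧
    -- closed under matrix addition, negation, and scalar multiplication
    (∀ A B, Gamma k A → Gamma k B → Gamma k (fun i j => A i j + B i j)) ∧
    (∀ A, Gamma k A → Gamma k (fun i j => - A i j)) ∧
    (∀ (c : k) (A), Gamma k A → Gamma k (fun i j => c * A i j)) ∧
    -- matrix multiplication is well defined and Γ is closed under it
    (∀ A B, Gamma k A → Gamma k B →
      (∀ i l, {j | A i j * B j l ≠ 0}.Finite) ∧
      Gamma k (fun i l => ∑ᶠ j, A i j * B j l)) := by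
  refine ⟨?_, ?_, ?_, ?_, ?_, ?_⟩
  · -- zero matrix
    constructor
    · apply (Set.finite_singleton (0 : k)).subset
      rintro x ⟨i, j, rfl⟩; rfl
    · exact ⟨0, fun i => by simp, fun j => by simp⟩
  · -- identity matrix
    constructor
    · apply ((Set.finite_singleton (0:k)).insert 1).subset
      rintro x ⟨i, j, rfl⟩
      by_cases h : i = j <;> simp [h]
    · refine ⟨1, fun i => ?_, fun j => ?_⟩
      · refine le_trans (Set.encard_mono (show _ ≤ ({i} : Set ℕ) from ?_)) (by simp)
        intro j hj
        simp only [Set.mem_setOf_eq] at hj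
        by_contra hij
        simp only [Set.mem_singleton_iff] at hij
        exact hj (if_neg (fun h => hij h.symm))
      · refine le_trans (Set.encard_mono (show _ ≤ ({j} : Set ℕ) from ?_)) (by simp)
        intro i hi
        simp only [Set.mem_setOf_eq] at hi
        by_contra hij
        simp only [Set.mem_singleton_iff] at hij
        exact hi (by simp [hij])
  · -- addition
    rintro A B ⟨hAfin, nA, hArow, hAcol⟩ ⟨hBfin, nB, hBrow, hBcol⟩
    constructor
    · apply (hAfin.image2 (· + ·) hBfin).subset
      rintro x ⟨i, j, rfl⟩
      exact Set.mem_image2_of_mem ⟨i, j, rfl⟩ ⟨i, j, rfl⟩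
    · refine ⟨nA + nB, fun i => ?_, fun j => ?_⟩
      · have hsub : {j | A i j + B i j ≠ 0} ⊆ {j | A i j ≠ 0} ∪ {j | B i j ≠ 0} := by
          intro j hj
          by_contra h
          simp only [Set.mem_union, Set.mem_setOf_eq, not_or, not_not] at h
          exact hj (by simp [h.1, h.2])
        calc ({j | A i j + B i j ≠ 0}).encard ≤ _ := Set.encard_mono hsub
          _ ≤ _ := Set.encard_union_le _ _
          _ ≤ (nA : ℕ∞) + nB := add_le_add (hArow i) (hBrow i)
          _ = ((nA + nB : ℕ) : ℕ∞) := by push_cast; ring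
      · have hsub : {i | A i j + B i j ≠ 0} ⊆ {i | A i j ≠ 0} ∪ {i | B i j ≠ 0} := by
          intro i hi
          by_contra h
          simp only [Set.mem_union, Set.mem_setOf_eq, not_or, not_not] at h
          exact hi (by simp [h.1, h.2])
        calc ({i | A i j + B i j ≠ 0}).encard ≤ _ := Set.encard_mono hsub
          _ ≤ _ := Set.encard_union_le _ _
          _ ≤ (nA : ℕ∞) + nB := add_le_add (hAcol j) (hBcol j)
          _ = ((nA + nB : ℕ) : ℕ∞) := by push_cast; ring
  · -- negation
    rintro A ⟨hAfin, nA, hArow, hAcol⟩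
    constructor
    · apply (hAfin.image Neg.neg).subset
      rintro x ⟨i, j, rfl⟩
      exact ⟨A i j, ⟨i, j, rfl⟩, rfl⟩
    · refine ⟨nA, fun i => ?_, fun j => ?_⟩
      · refine le_trans (Set.encard_mono ?_) (hArow i)
        intro j hj
        simpa using hj
      · refine le_trans (Set.encard_mono ?_) (hAcol j)
        intro i hi
        simpa using hi
  · -- scalar multiplication
    rintro c A ⟨hAfin, nA, hArow, hAcol⟩
    constructor
    · apply (hAfin.image (c * ·)).subset
      rintro x ⟨i, j, rfl⟩
      exact ⟨A i j, ⟨i, j, rfl⟩, rfl⟩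
    · refine ⟨nA, fun i => ?_, fun j => ?_⟩
      · refine le_trans (Set.encard_mono ?_) (hArow i)
        intro j hj
        simp only [Set.mem_setOf_eq] at hj ⊢
        intro h; exact hj (by simp [h])
      · refine le_trans (Set.encard_mono ?_) (hAcol j)
        intro i hi
        simp only [Set.mem_setOf_eq] at hi ⊢
        intro h; exact hi (by simp [h])
  · -- multiplication
    rintro A B ⟨hAfin, nA, hArow, hAcol⟩ ⟨hBfin, nB, hBrow, hBcol⟩
    have hsupp : ∀ i l, {j | A i j * B j l ≠ 0}.Finite := by
      intro i l
      apply (Set.finite_of_encard_le_coe (hArow i)).subset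
      intro j hj
      exact left_ne_zero_of_mul hj
    refine ⟨hsupp, ?_, ?_⟩
    · -- finite entry set
      obtain ⟨T, hTfin, _, hT⟩ :=
        exists_finite_sums (Set.image2 (· * ·) {x : k | ∃ i j, A i j = x}
          {x : k | ∃ i j, B i j = x}) (hAfin.image2 _ hBfin) nA
      apply hTfin.subset
      rintro x ⟨i, l, rfl⟩
      have hfin : (Function.support fun j => A i j * B j l).Finite := by
        apply (hsupp i l).subset
        intro j hj
        exact hj
      show (∑ᶠ j, A i j * B j l) ∈ T
      rw [finsum_eq_sum _ hfin]
      apply hT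
      · have hsub : (Function.support fun j => A i j * B j l) ⊆ {j | A i j ≠ 0} := by
          intro j hj
          exact left_ne_zero_of_mul hj
        have := le_trans (Set.encard_mono hsub) (hArow i)
        rwa [hfin.encard_eq_coe_toFinset_card, Nat.cast_le] at this
      · intro j _
        exact Set.mem_image2_of_mem ⟨i, j, rfl⟩ ⟨j, l, rfl⟩
    · -- uniform row/column bounds
      refine ⟨nA * nB, fun i => ?_, fun l => ?_⟩
      · have hsub : {l | (∑ᶠ j, A i j * B j l) ≠ 0} ⊆
            ⋃ j ∈ {j | A i j ≠ 0}, {l | B j l ≠ 0} := by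
          intro l hl
          simp only [Set.mem_setOf_eq] at hl
          by_contra h
          simp only [Set.mem_iUnion, Set.mem_setOf_eq, not_exists, not_not] at h
          apply hl
          apply finsum_eq_zero_of_forall_eq_zero
          intro j
          by_cases hA : A i j = 0
          · simp [hA]
          · simp [h j hA]
        exact le_trans (Set.encard_mono hsub)
          (encard_biUnion_le_aux (hArow i) (fun j => hBrow j))
      · have hsub2 : {i | (∑ᶠ j, A i j * B j l) ≠ 0} ⊆
            ⋃ j ∈ {j | B j l ≠ 0}, {i | A i j ≠ 0} := by
          intro i hi
          simp only [Set.mem_setOf_eq] at hi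
          by_contra h
          simp only [Set.mem_iUnion, Set.mem_setOf_eq, not_exists, not_not] at h
          apply hi
          apply finsum_eq_zero_of_forall_eq_zero
          intro j
          by_cases hB : B j l = 0
          · simp [hB]
          · simp [h j hB]
        calc ({i | (∑ᶠ j, A i j * B j l) ≠ 0}).encard
            ≤ _ := Set.encard_mono hsub2
          _ ≤ ((nB * nA : ℕ) : ℕ∞) := encard_biUnion_le_aux (hBcol l) (fun j => hAcol j)
          _ = ((nA * nB : ℕ) : ℕ∞) := by rw [Nat.mul_comm]
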